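/- Let e = (e_1,...,e_k) be a sequence of edges with probabilities p_{e_i} ∈ [0,1] and weights w_{e_i} ≥ 0, and let e^r be the rearrangement of e in non-increasing order of the weights w_{e_i}. Then val(e^r) ≥ val(e), where val(e) := Σ_{i=1}^{k} p_{e_i} w_{e_i} ∏_{j<i}(1 - p_{e_j}). -/

import Mathlib

/-- `val p w = Σ_i p_i w_i ∏_{j<i} (1 - p_j)`: the expected weight of the first active
edge when edges are probed in index order. -/
noncomputable def probeVal (k : ℕ) (p w : Fin k → ℝ) : ℝ :=
  ∑ i, p i * w i * ∏ j ∈ Finset.Iio i, (1 - p j)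

/-- Fold version of `probeVal` on a list of (probability, weight) pairs. -/
noncomputable def probeF : List (ℝ × ℝ) → ℝ
  | [] => 0
  | x :: l => x.1 * x.2 + (1 - x.1) * probeF l

lemma Iio_succ_eq (k : ℕ) (i : Fin k) :
    Finset.Iio (i.succ) = insert (0 : Fin (k+1)) ((Finset.Iio i).map (Fin.succEmb k)) := by
  ext j
  cases j using Fin.cases with
  | zero => simp [Fin.succ_pos]
  | succ j' =>
      simp only [Finset.mem_Iio, Finset.mem_insert, Finset.mem_map, Fin.succEmb,
        Function.Embedding.coeFn_mk, Fin.succ_lt_succ_iff, Fin.succ_inj]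
      constructor
      · intro h; exact Or.inr ⟨j', h, rfl⟩
      · rintro (h | ⟨a, ha, rfl⟩)
        · exact absurd h (Fin.succ_ne_zero j')
        · exact ha

lemma probeVal_succ (n : ℕ) (p w : Fin (n+1) → ℝ) :
    probeVal (n+1) p w
      = p 0 * w 0 + (1 - p 0) * probeVal n (p ∘ Fin.succ) (w ∘ Fin.succ) := by
  unfold probeVal
  rw [Fin.sum_univ_succ, Finset.mul_sum]
  have h0 : Finset.Iio (0 : Fin (n+1)) = ∅ := by ext j; simp
  congr 1
  · rw [h0]; simp
  · refine Finset.sum_congr rfl fun i _ => ?_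
    rw [Iio_succ_eq, Finset.prod_insert (by simp [Fin.succ_ne_zero]), Finset.prod_map]
    simp only [Fin.succEmb, Function.comp_apply, Function.Embedding.coeFn_mk]
    ring

lemma probeVal_eq_probeF : ∀ (k : ℕ) (p w : Fin k → ℝ),
    probeVal k p w = probeF (List.ofFn fun i => (p i, w i)) := by
  intro k
  induction k with
  | zero => intro p w; simp [probeVal, probeF]
  | succ n ih =>
      intro p w
      rw [probeVal_succ, List.ofFn_succ]
      simp only [probeF, ih (p ∘ Fin.succ) (w ∘ Fin.succ)]
      rfl

lemma probeF_swap (a b : ℝ × ℝ) (l : List (ℝ × ℝ)) (ha : 0 ≤ a.1) (hb : 0 ≤ b.1)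
    (hw : a.2 ≤ b.2) : probeF (a :: b :: l) ≤ probeF (b :: a :: l) := by
  simp only [probeF]
  nlinarith [mul_nonneg ha hb]

lemma probeF_bubble : ∀ (u : List (ℝ × ℝ)) (b : ℝ × ℝ) (v : List (ℝ × ℝ)),
    (∀ a ∈ u, a.1 ∈ Set.Icc (0:ℝ) 1 ∧ a.2 ≤ b.2) → 0 ≤ b.1 →
    probeF (u ++ b :: v) ≤ probeF (b :: (u ++ v)) := by
  intro u
  induction u with
  | nil => intro b v _ _; simp
  | cons a u ih =>
      intro b v hcond hb
      have ha := hcond a List.mem_cons_self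
      have step : probeF (u ++ b :: v) ≤ probeF (b :: (u ++ v)) :=
        ih b v (fun x hx => hcond x (List.mem_cons_of_mem a hx)) hb
      calc probeF ((a :: u) ++ b :: v)
          = a.1 * a.2 + (1 - a.1) * probeF (u ++ b :: v) := rfl
        _ ≤ a.1 * a.2 + (1 - a.1) * probeF (b :: (u ++ v)) := by
            have h1 : (0:ℝ) ≤ 1 - a.1 := by linarith [ha.1.2]
            nlinarith
        _ = probeF (a :: b :: (u ++ v)) := rfl
        _ ≤ probeF (b :: a :: (u ++ v)) := probeF_swap a b _ ha.1.1 hb ha.2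
        _ = probeF (b :: ((a :: u) ++ v)) := rfl

lemma probeF_le_sorted : ∀ (l₂ l₁ : List (ℝ × ℝ)), l₁.Perm l₂ →
    l₂.Pairwise (fun x y => y.2 ≤ x.2) → (∀ x ∈ l₁, x.1 ∈ Set.Icc (0:ℝ) 1) →
    probeF l₁ ≤ probeF l₂ := by
  intro l₂
  induction l₂ with
  | nil => intro l₁ hperm _ _; rw [List.perm_nil.mp hperm]
  | cons b t ih =>
      intro l₁ hperm hsort hcond
      have hb : b ∈ l₁ := hperm.mem_iff.2 List.mem_cons_self
      obtain ⟨u, v, rfl⟩ := List.append_of_mem hb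
      have hmid : (u ++ b :: v).Perm (b :: (u ++ v)) := List.perm_middle
      have hperm' : (u ++ v).Perm t := (hmid.symm.trans hperm).cons_inv
      have hbc : b.1 ∈ Set.Icc (0:ℝ) 1 := hcond b hb
      have hbt : ∀ y ∈ t, y.2 ≤ b.2 := fun y hy => List.rel_of_pairwise_cons hsort hy
      have hub : ∀ a ∈ u, a.1 ∈ Set.Icc (0:ℝ) 1 ∧ a.2 ≤ b.2 := by
        intro a hau
        have hal : a ∈ u ++ b :: v := List.mem_append_left _ hau
        refine ⟨hcond a hal, ?_⟩
        have : a ∈ b :: t := hperm.mem_iff.1 hal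
        rcases List.mem_cons.1 this with h | h
        · rw [h]
        · exact hbt a h
      calc probeF (u ++ b :: v) ≤ probeF (b :: (u ++ v)) :=
            probeF_bubble u b v hub hbc.1
        _ = b.1 * b.2 + (1 - b.1) * probeF (u ++ v) := rfl
        _ ≤ b.1 * b.2 + (1 - b.1) * probeF t := by
            have h1 : (0:ℝ) ≤ 1 - b.1 := by linarith [hbc.2]
            have h2 : probeF (u ++ v) ≤ probeF t :=
              ih (u ++ v) hperm' hsort.of_cons
                (fun x hx => hcond x (by
                  have := List.mem_append.1 hx
                  rcases this with h | h
                  · exact List.mem_append_left _ h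
                  · exact List.mem_append_right _ (List.mem_cons_of_mem b h)))
            nlinarith
        _ = probeF (b :: t) := rfl

/-- rearranging a tuple of edges in non-increasing order of the weights
does not decrease `val`. -/
theorem probeVal_le_of_sorted_rearrangement
    (k : ℕ) (p w : Fin k → ℝ)
    (hp : ∀ i, p i ∈ Set.Icc (0 : ℝ) 1) (hw : ∀ i, 0 ≤ w i)
    (σ : Equiv.Perm (Fin k)) (hσ : Antitone fun i => w (σ i)) :
    probeVal k p w ≤ probeVal k (p ∘ σ) (w ∘ σ) := by
  have h1 := probeVal_eq_probeF k p w
  have h2 := probeVal_eq_probeF k (p ∘ σ) (w ∘ σ)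
  rw [h1, h2]
  have hfn : (fun i => ((p ∘ σ) i, (w ∘ σ) i)) = (fun i => (p i, w i)) ∘ σ := rfl
  rw [hfn]
  refine probeF_le_sorted _ _ ?_ ?_ ?_
  · exact (Equiv.Perm.ofFn_comp_perm σ (fun i => (p i, w i))).symm
  · rw [List.pairwise_ofFn]
    intro i j hij
    exact hσ hij.le
  · intro x hx
    rw [List.mem_ofFn] at hx
    obtain ⟨i, rfl⟩ := hx
    exact hp i
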